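/- arXiv:1804.10457 — 3 statements merged into one kernel-verified Lean document; each statement's English description precedes it below -/
import Mathlib

section
/- Let P₁,…,Pₙ be pairwise distinct pure states on ℂ^d with n ≥ 2, and suppose there exist positive real numbers t₁,…,tₙ and an orthogonal projection R with ∑_{j=1}^n t_j P_j = R. Then P₁,…,Pₙ are antidistinguishable. -/
open Matrix BigOperators
open scoped ComplexOrder

/-- A state (density matrix) on ℂ^d: positive semidefinite (hence Hermitian) with trace 1. -/
def IsState {d : ℕ} (ρ : Matrix (Fin d) (Fin d) ℂ) : Prop :=
  ρ.PosSemidef ∧ ρ.trace = 1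

/-- A POVM with outcomes 1,…,n. -/
def IsPOVM {d n : ℕ} (M : Fin n → Matrix (Fin d) (Fin d) ℂ) : Prop :=
  (∀ j, (M j).PosSemidef) ∧ ∑ j, M j = 1

/-- States are distinguishable if some POVM identifies each with certainty. -/
def Distinguishable {d n : ℕ} (ρ : Fin n → Matrix (Fin d) (Fin d) ℂ) : Prop :=
  ∃ M : Fin n → Matrix (Fin d) (Fin d) ℂ, IsPOVM M ∧ ∀ j, (ρ j * M j).trace = 1

/-- States are antidistinguishable if some POVM excludes each with certainty,
with every outcome occurring for at least one state. -/
def Antidistinguishable {d n : ℕ} (ρ : Fin n → Matrix (Fin d) (Fin d) ℂ) : Prop :=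
  ∃ M : Fin n → Matrix (Fin d) (Fin d) ℂ, IsPOVM M ∧
    ∀ j, (ρ j * M j).trace = 0 ∧ ∑ k, (ρ k * M j).trace ≠ 0

/-- A pure state on ℂ^d: a rank-one orthogonal projection. -/
def IsPureState {d : ℕ} (P : Matrix (Fin d) (Fin d) ℂ) : Prop :=
  P.IsHermitian ∧ P * P = P ∧ P.trace = 1

/- ### Auxiliary lemmas -/

lemma trace_ctms_nonneg {m d : ℕ} (A : Matrix (Fin m) (Fin d) ℂ) : 0 ≤ (Aᴴ * A).trace := by
  rw [Matrix.trace]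
  refine Finset.sum_nonneg fun j _ => ?_
  simp only [Matrix.diag_apply, Matrix.mul_apply, Matrix.conjTranspose_apply]
  exact Finset.sum_nonneg fun i _ => star_mul_self_nonneg _

lemma trace_ctms_eq_zero {m d : ℕ} {A : Matrix (Fin m) (Fin d) ℂ}
    (h : (Aᴴ * A).trace = 0) : A = 0 := by
  rw [Matrix.trace] at h
  have h1 : ∀ j ∈ Finset.univ, (0:ℂ) ≤ (Aᴴ * A).diag j := fun j _ => by
    simp only [Matrix.diag_apply, Matrix.mul_apply, Matrix.conjTranspose_apply]
    exact Finset.sum_nonneg fun i _ => star_mul_self_nonneg _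
  have h2 := (Finset.sum_eq_zero_iff_of_nonneg h1).mp h
  ext i j
  have h3 := h2 j (Finset.mem_univ j)
  simp only [Matrix.diag_apply, Matrix.mul_apply, Matrix.conjTranspose_apply] at h3
  have h4 := (Finset.sum_eq_zero_iff_of_nonneg
    (fun i _ => star_mul_self_nonneg (A i j))).mp h3 i (Finset.mem_univ i)
  have h5 : (Complex.normSq (A i j) : ℂ) = 0 := by
    rw [Complex.normSq_eq_conj_mul_self]; exact h4
  have h6 : Complex.normSq (A i j) = 0 := by exact_mod_cast h5
  simpa using Complex.normSq_eq_zero.mp h6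

lemma psd_of_proj {d : ℕ} {A : Matrix (Fin d) (Fin d) ℂ} (hH : A.IsHermitian)
    (hI : A * A = A) : A.PosSemidef := by
  have h2 : Aᴴ * A = A := by rw [hH.eq, hI]
  exact h2 ▸ Matrix.posSemidef_conjTranspose_mul_self A

lemma psd_trace_nonneg {d : ℕ} {A : Matrix (Fin d) (Fin d) ℂ} (hA : A.PosSemidef) :
    0 ≤ A.trace := by
  obtain ⟨B, rfl⟩ := (show ∃ B : Matrix (Fin d) (Fin d) ℂ, A = Bᴴ * B by
    open scoped MatrixOrder in exact CStarAlgebra.nonneg_iff_eq_star_mul_self.mp hA.nonneg)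
  exact trace_ctms_nonneg B

lemma psd_trace_eq_zero {d : ℕ} {A : Matrix (Fin d) (Fin d) ℂ} (hA : A.PosSemidef)
    (h : A.trace = 0) : A = 0 := by
  obtain ⟨B, rfl⟩ := (show ∃ B : Matrix (Fin d) (Fin d) ℂ, A = Bᴴ * B by
    open scoped MatrixOrder in exact CStarAlgebra.nonneg_iff_eq_star_mul_self.mp hA.nonneg)
  rw [trace_ctms_eq_zero h, Matrix.mul_zero]

lemma psd_trace_mul_nonneg {d : ℕ} {A B : Matrix (Fin d) (Fin d) ℂ}
    (hA : A.PosSemidef) (hB : B.PosSemidef) : 0 ≤ (A * B).trace := by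
  obtain ⟨C, rfl⟩ := (show ∃ C : Matrix (Fin d) (Fin d) ℂ, A = Cᴴ * C by
    open scoped MatrixOrder in exact CStarAlgebra.nonneg_iff_eq_star_mul_self.mp hA.nonneg)
  obtain ⟨D, rfl⟩ := (show ∃ D : Matrix (Fin d) (Fin d) ℂ, B = Dᴴ * D by
    open scoped MatrixOrder in exact CStarAlgebra.nonneg_iff_eq_star_mul_self.mp hB.nonneg)
  have key : ((Cᴴ * C) * (Dᴴ * D)).trace = ((D * Cᴴ)ᴴ * (D * Cᴴ)).trace := by
    rw [show (Cᴴ * C) * (Dᴴ * D) = Cᴴ * (C * Dᴴ * D) by simp [Matrix.mul_assoc],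
      Matrix.trace_mul_comm]
    congr 1
    simp [Matrix.conjTranspose_mul, Matrix.mul_assoc]
  rw [key]; exact trace_ctms_nonneg _

lemma psd_smul_real {d : ℕ} {A : Matrix (Fin d) (Fin d) ℂ} (hA : A.PosSemidef)
    {c : ℝ} (hc : 0 ≤ c) : ((c:ℂ) • A).PosSemidef := by
  constructor
  · show ((c:ℂ) • A)ᴴ = _
    rw [Matrix.conjTranspose_smul, hA.1.eq]
    congr 1
    simp [Complex.star_def]
  · intro x
    exact (hA.smul (by exact_mod_cast Complex.zero_le_real.mpr hc : (0:ℂ) ≤ (c:ℂ))).2 x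

/-- if ∑ t_j P_j is an orthogonal projection for some positive reals
t_j, then the pairwise distinct pure states P_j (n ≥ 2) are antidistinguishable. -/
theorem antidistinguishable_of_sum_eq_projection {d n : ℕ} (hn : 2 ≤ n)
    (P : Fin n → Matrix (Fin d) (Fin d) ℂ) (hP : ∀ j, IsPureState (P j))
    (hinj : Function.Injective P) (t : Fin n → ℝ) (ht : ∀ j, 0 < t j)
    (R : Matrix (Fin d) (Fin d) ℂ) (hR : R.IsHermitian ∧ R * R = R)
    (hsum : ∑ j, (t j : ℂ) • P j = R) :
    Antidistinguishable P := by
  classical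
  obtain ⟨hRH, hRidem⟩ := hR
  have hPH : ∀ j, (P j).IsHermitian := fun j => (hP j).1
  have hPidem : ∀ j, P j * P j = P j := fun j => (hP j).2.1
  have hPtr : ∀ j, (P j).trace = 1 := fun j => (hP j).2.2
  have hPpsd : ∀ j, (P j).PosSemidef := fun j => psd_of_proj (hPH j) (hPidem j)
  set Q : Matrix (Fin d) (Fin d) ℂ := 1 - R with hQdef
  have hQH : Q.IsHermitian := by
    show Qᴴ = Q
    simp [hQdef, Matrix.conjTranspose_sub, hRH.eq]
  have hQidem : Q * Q = Q := by
    simp only [hQdef, Matrix.sub_mul, Matrix.mul_sub, Matrix.one_mul, Matrix.mul_one, hRidem]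
    abel
  have hQpsd : Q.PosSemidef := psd_of_proj hQH hQidem
  have hQR : Q * R = 0 := by
    simp only [hQdef, Matrix.sub_mul, Matrix.one_mul, hRidem, sub_self]
  -- P j * Q = 0 for all j
  have hform : ∀ k, Q * P k * Q = (P k * Q)ᴴ * (P k * Q) := by
    intro k
    rw [Matrix.conjTranspose_mul, hQH.eq, (hPH k).eq,
      show Q * (P k) * (P k * Q) = Q * (P k * P k) * Q by simp [Matrix.mul_assoc],
      hPidem k]
  have hPQ : ∀ j, P j * Q = 0 := by
    have hExpand : ∑ k, (t k : ℂ) • (Q * P k * Q) = 0 := by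
      have h1 : Q * (∑ j, (t j:ℂ) • P j) * Q = 0 := by
        rw [hsum, Matrix.mul_assoc, ← Matrix.mul_assoc, hQR, Matrix.zero_mul]
      rw [← h1, Finset.mul_sum, Finset.sum_mul]
      refine Finset.sum_congr rfl fun k _ => ?_
      rw [mul_smul_comm, smul_mul_assoc]
    have htr : ∑ k, (t k : ℂ) * (Q * P k * Q).trace = 0 := by
      have := congrArg Matrix.trace hExpand
      simpa [Matrix.trace_sum, Matrix.trace_smul] using this
    have hnn : ∀ k ∈ Finset.univ, (0:ℂ) ≤ (t k : ℂ) * (Q * P k * Q).trace := by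
      intro k _
      refine mul_nonneg (Complex.zero_le_real.mpr (ht k).le) ?_
      rw [hform k]; exact trace_ctms_nonneg _
    have hzero := (Finset.sum_eq_zero_iff_of_nonneg hnn).mp htr
    intro j
    have hj := hzero j (Finset.mem_univ j)
    have htj : ((t j : ℂ)) ≠ 0 := by
      exact_mod_cast Complex.ofReal_ne_zero.mpr (ne_of_gt (ht j))
    have h2 : (Q * P j * Q).trace = 0 := by
      rcases mul_eq_zero.mp hj with h | h
      · exact absurd h htj
      · exact h
    rw [hform j] at h2
    exact trace_ctms_eq_zero h2
  have hQP : ∀ j, Q * P j = 0 := by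
    intro j
    have : (P j * Q)ᴴ = Q * P j := by
      rw [Matrix.conjTranspose_mul, hQH.eq, (hPH j).eq]
    rw [← this, hPQ j, Matrix.conjTranspose_zero]
  have hRP : ∀ j, R * P j = P j := by
    intro j
    have := hQP j
    rw [hQdef, Matrix.sub_mul, Matrix.one_mul, sub_eq_zero] at this
    exact this.symm
  have hPR : ∀ j, P j * R = P j := by
    intro j
    have := hPQ j
    rw [hQdef, Matrix.mul_sub, Matrix.mul_one, sub_eq_zero] at this
    exact this.symm
  set r : ℝ := ∑ j, t j with hrdef
  have htrR : R.trace = (r : ℂ) := by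
    rw [← hsum, Matrix.trace_sum]
    simp only [Matrix.trace_smul, hPtr, smul_eq_mul, mul_one]
    push_cast [hrdef]
    rfl
  -- S j := R - P j is a projection
  have hSH : ∀ j, (R - P j).IsHermitian := fun j => hRH.sub (hPH j)
  have hSidem : ∀ j, (R - P j) * (R - P j) = R - P j := by
    intro j
    rw [Matrix.sub_mul, Matrix.mul_sub, Matrix.mul_sub, hRidem, hRP j, hPR j, hPidem j]
    abel
  have hSpsd : ∀ j, (R - P j).PosSemidef := fun j => psd_of_proj (hSH j) (hSidem j)
  have hStr : ∀ j, (R - P j).trace = ((r - 1 : ℝ) : ℂ) := by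
    intro j
    rw [Matrix.trace_sub, htrR, hPtr j]
    push_cast
    ring
  have hn0 : 0 < n := by omega
  have hn1 : 1 < n := by omega
  have j0 : Fin n := ⟨0, hn0⟩
  -- 1 ≤ r
  have h1r : 1 ≤ r := by
    have h0 := psd_trace_nonneg (hSpsd ⟨0, hn0⟩)
    rw [hStr] at h0
    have := Complex.zero_le_real.mp h0
    linarith
  -- 1 < r
  have hltr : 1 < r := by
    rcases lt_or_eq_of_le h1r with h | h
    · exact h
    · exfalso
      have hReq : ∀ j, R = P j := by
        intro j
        have h0 : (R - P j).trace = 0 := by rw [hStr, ← h]; norm_num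
        have := psd_trace_eq_zero (hSpsd j) h0
        rwa [sub_eq_zero] at this
      have : P ⟨0, hn0⟩ = P ⟨1, hn1⟩ := by rw [← hReq ⟨0, hn0⟩, ← hReq ⟨1, hn1⟩]
      have := hinj this
      simp [Fin.ext_iff] at this
  have hr1 : (0:ℝ) < r - 1 := by linarith
  set c : ℝ := (r - 1)⁻¹ with hcdef
  have hcpos : 0 < c := inv_pos.mpr hr1
  have hc1 : (r - 1) * c = 1 := mul_inv_cancel₀ (ne_of_gt hr1)
  -- the POVM
  set MM : Fin n → Matrix (Fin d) (Fin d) ℂ :=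
    fun j => ((t j * c : ℝ) : ℂ) • (R - P j) + (((n : ℝ)⁻¹ : ℝ) : ℂ) • Q with hMMdef
  have hMMpsd : ∀ j, (MM j).PosSemidef := by
    intro j
    exact Matrix.PosSemidef.add
      (psd_smul_real (hSpsd j) (mul_nonneg (ht j).le hcpos.le))
      (psd_smul_real hQpsd (by positivity))
  have hMMsum : ∑ j, MM j = 1 := by
    rw [hMMdef]
    rw [Finset.sum_add_distrib]
    have hA : ∑ j, ((t j * c : ℝ) : ℂ) • (R - P j) = R := by
      have e1 : ∀ j : Fin n, ((t j * c : ℝ) : ℂ) • (R - P j)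
          = ((t j * c : ℝ) : ℂ) • R - (c : ℂ) • ((t j : ℂ) • P j) := by
        intro j
        rw [smul_sub, smul_smul]
        congr 2
        push_cast
        ring
      rw [Finset.sum_congr rfl fun j _ => e1 j, Finset.sum_sub_distrib,
        ← Finset.sum_smul, ← Finset.smul_sum, hsum]
      have hs : (∑ j, ((t j * c : ℝ) : ℂ)) = ((r * c : ℝ) : ℂ) := by
        push_cast
        rw [← Finset.sum_mul]
        norm_cast
      rw [hs, ← sub_smul]
      have hr2 : ((r * c : ℝ) : ℂ) - (c : ℂ) = 1 := by
        have e2 : (r * c - c : ℝ) = 1 := by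
          have e3 : (r - 1) * c = r * c - c := by ring
          linarith [hc1, e3]
        rw [← Complex.ofReal_sub, e2, Complex.ofReal_one]
      rw [hr2, one_smul]
    have hB : ∑ _j : Fin n, (((n : ℝ)⁻¹ : ℝ) : ℂ) • Q = Q := by
      rw [Finset.sum_const, Finset.card_univ, Fintype.card_fin,
        ← Nat.cast_smul_eq_nsmul ℂ, smul_smul]
      rw [show ((n:ℕ):ℂ) * (((n : ℝ)⁻¹ : ℝ) : ℂ) = 1 from ?_, one_smul]
      push_cast
      exact mul_inv_cancel₀ (Nat.cast_ne_zero.mpr (by omega))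
    rw [hA, hB, hQdef]
    abel
  refine ⟨MM, ⟨hMMpsd, hMMsum⟩, fun j => ⟨?_, ?_⟩⟩
  · -- trace (P j * MM j) = 0
    have hz : P j * MM j = 0 := by
      rw [hMMdef]
      rw [Matrix.mul_add, mul_smul_comm, mul_smul_comm, hPQ j, smul_zero, add_zero,
        Matrix.mul_sub, hPR j, hPidem j, sub_self, smul_zero]
    rw [hz, Matrix.trace_zero]
  · -- sum of traces nonzero
    have hterm : ∀ k, (P k * MM j).trace = ((t j * c : ℝ) : ℂ) * (P k * (R - P j)).trace := by
      intro k
      rw [hMMdef]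
      rw [Matrix.mul_add, mul_smul_comm, mul_smul_comm, hPQ k, smul_zero, add_zero,
        Matrix.trace_smul, smul_eq_mul]
    rw [Finset.sum_congr rfl fun k _ => hterm k, ← Finset.mul_sum]
    apply mul_ne_zero
    · exact_mod_cast Complex.ofReal_ne_zero.mpr (ne_of_gt (mul_pos (ht j) hcpos))
    · -- choose k0 ≠ j
      have hnonneg : ∀ k, 0 ≤ (P k * (R - P j)).trace :=
        fun k => psd_trace_mul_nonneg (hPpsd k) (hSpsd j)
      set k0 : Fin n := if j = ⟨0, hn0⟩ then ⟨1, hn1⟩ else ⟨0, hn0⟩ with hk0def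
      have hk0 : k0 ≠ j := by
        rw [hk0def]
        split_ifs with h
        · rw [h]; simp [Fin.ext_iff]
        · exact fun hc => h hc.symm
      have htrace1 : ∀ k, (P k * R).trace = 1 := by
        intro k; rw [hPR k, hPtr k]
      have hpos : 0 < (P k0 * (R - P j)).trace := by
        refine lt_of_le_of_ne (hnonneg k0) ?_
        intro h0
        have h0 := h0.symm
        rw [Matrix.mul_sub, Matrix.trace_sub, htrace1 k0, sub_eq_zero] at h0
        have hs1 : (P k0 * P j).trace = 1 := h0.symm
        have hs2 : (P j * P k0).trace = 1 := by rw [Matrix.trace_mul_comm]; exact hs1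
        have hD : ((P k0 - P j)ᴴ * (P k0 - P j)).trace = 0 := by
          rw [Matrix.conjTranspose_sub, (hPH k0).eq, (hPH j).eq, Matrix.sub_mul,
            Matrix.mul_sub, Matrix.mul_sub, hPidem k0, hPidem j]
          rw [Matrix.trace_sub, Matrix.trace_sub, Matrix.trace_sub,
            hPtr k0, hPtr j, hs1, hs2]
          ring
        have hD2 := trace_ctms_eq_zero hD
        rw [sub_eq_zero] at hD2
        exact hk0 (hinj hD2)
      have hsumpos : 0 < ∑ k, (P k * (R - P j)).trace :=
        Finset.sum_pos' (fun k _ => hnonneg k) ⟨k0, Finset.mem_univ _, hpos⟩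
      exact ne_of_gt hsumpos
end

section
/- Let P₁,…,Pₙ be pairwise distinct pure states on ℂ^d with n ≥ 2, and suppose there exist positive real numbers t₁,…,tₙ with ∑_{j=1}^n t_j P_j = I. Then P₁,…,Pₙ are antidistinguishable. -/
open Matrix BigOperators
open scoped ComplexOrder

lemma psd_smul' {d : ℕ} {A : Matrix (Fin d) (Fin d) ℂ} (hA : A.PosSemidef) {c : ℝ} (hc : 0 ≤ c) :
    ((c : ℂ) • A).PosSemidef := by
  refine Matrix.PosSemidef.of_dotProduct_mulVec_nonneg ?_ ?_
  · unfold Matrix.IsHermitian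
    rw [conjTranspose_smul, hA.1.eq]
    simp [Complex.star_def, Complex.conj_ofReal]
  · intro x
    rw [smul_mulVec, dotProduct_smul, smul_eq_mul]
    exact mul_nonneg (by exact_mod_cast hc) (hA.dotProduct_mulVec_nonneg x)

/-- if ∑ t_j P_j = I for some positive reals t_j, then the pairwise
distinct pure states P_j (n ≥ 2) are antidistinguishable. -/
theorem antidistinguishable_of_sum_eq_id {d n : ℕ} (hn : 2 ≤ n)
    (P : Fin n → Matrix (Fin d) (Fin d) ℂ) (hP : ∀ j, IsPureState (P j))
    (hinj : Function.Injective P) (t : Fin n → ℝ) (ht : ∀ j, 0 < t j)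
    (hsum : ∑ j, (t j : ℂ) • P j = 1) :
    Antidistinguishable P := by
  have hd : 2 ≤ d := by
    by_contra hdlt
    push_neg at hdlt
    interval_cases d
    · have h0 := (hP ⟨0, by omega⟩).2.2
      simp [Matrix.trace] at h0
    · have hall : ∀ j, P j = 1 := by
        intro j
        have htr := (hP j).2.2
        simp [Matrix.trace, Matrix.diag] at htr
        ext i k
        fin_cases i; fin_cases k
        simpa [Matrix.one_apply] using htr
      have h01 : (⟨0, by omega⟩ : Fin n) = ⟨1, by omega⟩ :=
        hinj ((hall _).trans (hall _).symm)
      simp at h01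
  set c : ℝ := ((d : ℝ) - 1)⁻¹ with hcdef
  have hdpos : (0:ℝ) < (d:ℝ) - 1 := by
    have : (2:ℝ) ≤ (d:ℝ) := by exact_mod_cast hd
    linarith
  have hcpos : 0 < c := inv_pos.mpr hdpos
  have hc1 : ((d:ℂ) - 1) * (c:ℂ) = 1 := by
    have h : ((d:ℝ) - 1) * c = 1 := by rw [hcdef, mul_inv_cancel₀ hdpos.ne']
    calc ((d:ℂ) - 1) * (c:ℂ) = ((((d:ℝ) - 1) * c : ℝ) : ℂ) := by push_cast; ring
    _ = 1 := by rw [h]; norm_num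
  have hPpsd : ∀ j, (P j).PosSemidef := by
    intro j
    have heq : P j = (P j)ᴴ * P j := by rw [(hP j).1.eq, (hP j).2.1]
    exact heq ▸ Matrix.posSemidef_conjTranspose_mul_self _
  have hQpsd : ∀ j, ((1 : Matrix (Fin d) (Fin d) ℂ) - P j).PosSemidef := by
    intro j
    have hH : ((1 : Matrix (Fin d) (Fin d) ℂ) - P j)ᴴ = 1 - P j := by
      rw [Matrix.conjTranspose_sub, Matrix.conjTranspose_one, (hP j).1.eq]
    have hI : ((1 : Matrix (Fin d) (Fin d) ℂ) - P j) * (1 - P j) = 1 - P j := by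
      rw [sub_mul, one_mul, mul_sub, mul_one, (hP j).2.1]
      abel
    have heq : (1 : Matrix (Fin d) (Fin d) ℂ) - P j = (1 - P j)ᴴ * (1 - P j) := by
      rw [hH, hI]
    exact heq ▸ Matrix.posSemidef_conjTranspose_mul_self _
  set M : Fin n → Matrix (Fin d) (Fin d) ℂ :=
    fun j => ((t j * c : ℝ) : ℂ) • (1 - P j) with hMdef
  have hMpsd : ∀ j, (M j).PosSemidef :=
    fun j => psd_smul' (hQpsd j) (le_of_lt (mul_pos (ht j) hcpos))
  have htsum : ∑ j, (t j : ℂ) = (d : ℂ) := by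
    have h := congrArg Matrix.trace hsum
    rw [Matrix.trace_sum] at h
    have h2 : ∑ j, ((t j : ℂ) • P j).trace = ∑ j, (t j : ℂ) := by
      apply Finset.sum_congr rfl
      intro j _
      rw [Matrix.trace_smul, (hP j).2.2, smul_eq_mul, mul_one]
    rw [h2, Matrix.trace_one] at h
    simpa using h
  have hMsum : ∑ j, M j = 1 := by
    have hterm : ∀ j, M j = ((t j : ℂ) * c) • (1 : Matrix (Fin d) (Fin d) ℂ)
        - (c : ℂ) • ((t j : ℂ) • P j) := by
      intro j
      rw [hMdef]
      simp only
      rw [smul_sub]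
      congr 1
      · push_cast; ring_nf
      · rw [smul_smul]; push_cast; ring_nf
    rw [Finset.sum_congr rfl (fun j _ => hterm j), Finset.sum_sub_distrib, ← Finset.sum_smul,
        ← Finset.smul_sum, hsum, ← Finset.sum_mul, htsum, ← sub_smul]
    have hdc : (d:ℂ) * (c:ℂ) - (c:ℂ) = 1 := by rw [← hc1]; ring
    rw [hdc, one_smul]
  refine ⟨M, ⟨hMpsd, hMsum⟩, fun j => ⟨?_, ?_⟩⟩
  · have hz : P j * M j = 0 := by
      rw [hMdef]
      simp only
      rw [mul_smul_comm, mul_sub, mul_one, (hP j).2.1, sub_self, smul_zero]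
    rw [hz, Matrix.trace_zero]
  · intro hzero
    have hall : ∀ k ∈ Finset.univ, (P k * M j).trace = 0 :=
      (Finset.sum_eq_zero_iff_of_nonneg
        (fun k _ => psd_trace_mul_nonneg (hPpsd k) (hMpsd j))).mp hzero
    have hMj : (M j).trace = (t j : ℂ) := by
      rw [hMdef]
      simp only
      rw [Matrix.trace_smul, Matrix.trace_sub, Matrix.trace_one, (hP j).2.2, smul_eq_mul]
      calc ((t j * c : ℝ) : ℂ) * ((Fintype.card (Fin d) : ℂ) - 1)
          = (t j : ℂ) * (((d:ℂ) - 1) * (c:ℂ)) := by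
            rw [Fintype.card_fin]; push_cast; ring
        _ = (t j : ℂ) := by rw [hc1, mul_one]
    have h1 : ((1 : Matrix (Fin d) (Fin d) ℂ) * M j).trace
        = ∑ k, (t k : ℂ) * (P k * M j).trace := by
      rw [← hsum, Finset.sum_mul, Matrix.trace_sum]
      exact Finset.sum_congr rfl fun k _ => by
        rw [Matrix.smul_mul, Matrix.trace_smul, smul_eq_mul]
    rw [one_mul, hMj] at h1
    have htj0 : (t j : ℂ) = 0 := by
      rw [h1]
      exact Finset.sum_eq_zero fun k hk => by rw [hall k hk, mul_zero]
    exact (Complex.ofReal_ne_zero.mpr (ht j).ne') htj0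
end

section
/- Let G be a finite group with |G| ≥ 2 and U : G → U(d) a unitary representation on ℂ^d such that every d×d complex matrix commuting with all U_g is a scalar multiple of the identity. Let P be a pure state on ℂ^d such that the map g ↦ U_g P U_g* is injective. Then the pure states (U_g P U_g*)_{g∈G} are antidistinguishable, with antidistinguishing POVM M(g) = (d / (|G|(d−1))) · U_g (I − P) U_g*. -/
open Matrix BigOperators
open scoped ComplexOrder

lemma key_lemma {d : ℕ} {G : Type} [Group G] [Fintype G]
    (U : G →* Matrix.unitaryGroup (Fin d) ℂ)
    (hirr : ∀ A : Matrix (Fin d) (Fin d) ℂ,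
      (∀ g : G, A * (U g : Matrix (Fin d) (Fin d) ℂ) = (U g : Matrix (Fin d) (Fin d) ℂ) * A) →
      ∃ c : ℂ, A = c • 1)
    (hd : (d : ℂ) ≠ 0) (X : Matrix (Fin d) (Fin d) ℂ) :
    ∑ g, (U g : Matrix (Fin d) (Fin d) ℂ) * X * star (U g : Matrix (Fin d) (Fin d) ℂ)
      = ((Fintype.card G : ℂ) * X.trace / d) • 1 := by
  set A := ∑ g, (U g : Matrix (Fin d) (Fin d) ℂ) * X * star (U g : Matrix (Fin d) (Fin d) ℂ) with hA
  have hcomm : ∀ h : G, A * (U h : Matrix (Fin d) (Fin d) ℂ)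
      = (U h : Matrix (Fin d) (Fin d) ℂ) * A := by
    intro h
    rw [hA, Finset.sum_mul, Finset.mul_sum]
    rw [← Equiv.sum_comp (Equiv.mulLeft h) (fun g => (U g : Matrix (Fin d) (Fin d) ℂ) * X * star (U g : Matrix (Fin d) (Fin d) ℂ) * (U h : Matrix (Fin d) (Fin d) ℂ))]
    refine Finset.sum_congr rfl fun g _ => ?_
    have h1 : (U (h * g) : Matrix (Fin d) (Fin d) ℂ)
        = (U h : Matrix (Fin d) (Fin d) ℂ) * (U g : Matrix (Fin d) (Fin d) ℂ) := by
      rw [_root_.map_mul]; rfl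
    simp only [Equiv.coe_mulLeft]
    rw [h1, StarMul.star_mul]
    simp only [mul_assoc, Matrix.UnitaryGroup.star_mul_self, mul_one]
  obtain ⟨c, hc⟩ := hirr A hcomm
  have htr : A.trace = (Fintype.card G : ℂ) * X.trace := by
    rw [hA, Matrix.trace_sum]
    have : ∀ g : G, ((U g : Matrix (Fin d) (Fin d) ℂ) * X * star (U g : Matrix (Fin d) (Fin d) ℂ)).trace = X.trace := by
      intro g
      rw [Matrix.trace_mul_comm, ← mul_assoc, Matrix.UnitaryGroup.star_mul_self, one_mul]
    simp [this, Finset.sum_const, mul_comm]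
  rw [hc] at htr ⊢
  rw [Matrix.trace_smul, Matrix.trace_one] at htr
  congr 1
  field_simp at htr ⊢
  simpa [mul_comm] using htr

lemma smul_psd {n : ℕ} {c : ℂ} (hc : 0 ≤ c) {M : Matrix (Fin n) (Fin n) ℂ}
    (h : M.PosSemidef) : (c • M).PosSemidef := by
  have hcr : star c = c := by
    rw [Complex.star_def, Complex.conj_eq_iff_im]
    exact ((Complex.le_def.mp hc).2).symm
  refine ⟨?_, fun x => ?_⟩
  · unfold Matrix.IsHermitian
    rw [Matrix.conjTranspose_smul, hcr, h.1.eq]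
  · convert smul_nonneg hc (h.2 x) using 1
    simp only [smul_eq_mul, Finsupp.sum, Finset.mul_sum, Matrix.smul_apply]
    exact Finset.sum_congr rfl fun i _ => Finset.sum_congr rfl fun j _ => by ring

/-- for an irreducible unitary representation of a finite group G
(|G| ≥ 2) and a pure state P with injective orbit map g ↦ U_g P U_g*, the orbit
states are antidistinguished by the covariant POVM
M(g) = (d/(|G|(d−1)))·U_g (I − P) U_g*. -/
theorem orbit_antidistinguishable {d : ℕ} {G : Type} [Group G] [Fintype G]
    (hG : 2 ≤ Fintype.card G)
    (U : G →* Matrix.unitaryGroup (Fin d) ℂ)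
    (hirr : ∀ A : Matrix (Fin d) (Fin d) ℂ,
      (∀ g : G, A * (U g : Matrix (Fin d) (Fin d) ℂ) = (U g : Matrix (Fin d) (Fin d) ℂ) * A) →
      ∃ c : ℂ, A = c • 1)
    (P : Matrix (Fin d) (Fin d) ℂ) (hP : IsPureState P)
    (ρ : G → Matrix (Fin d) (Fin d) ℂ)
    (hρ : ∀ g, ρ g = (U g : Matrix (Fin d) (Fin d) ℂ) * P * star (U g : Matrix (Fin d) (Fin d) ℂ))
    (hinj : Function.Injective ρ)
    (M : G → Matrix (Fin d) (Fin d) ℂ)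
    (hM : ∀ g, M g = ((d : ℂ) / ((Fintype.card G : ℂ) * ((d : ℂ) - 1))) •
      ((U g : Matrix (Fin d) (Fin d) ℂ) * (1 - P) * star (U g : Matrix (Fin d) (Fin d) ℂ))) :
    (∀ g, (M g).PosSemidef) ∧ (∑ g, M g = 1) ∧
      ∀ g, (ρ g * M g).trace = 0 ∧ ∑ h, (ρ h * M g).trace ≠ 0 := by
  obtain ⟨hPh, hPP, hPtr⟩ := hP
  -- basic unitary facts
  have hUsm : ∀ g : G, star (U g : Matrix (Fin d) (Fin d) ℂ) * (U g : Matrix (Fin d) (Fin d) ℂ) = 1 :=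
    fun g => (U g).2.1
  have hUms : ∀ g : G, (U g : Matrix (Fin d) (Fin d) ℂ) * star (U g : Matrix (Fin d) (Fin d) ℂ) = 1 :=
    fun g => (U g).2.2
  -- d ≥ 2
  have hd2 : 2 ≤ d := by
    by_contra hlt
    push_neg at hlt
    interval_cases d
    · simp [Matrix.trace] at hPtr
    · have hP1 : P = 1 := by
        ext i j
        fin_cases i; fin_cases j
        have : P.trace = P 0 0 := by simp [Matrix.trace]
        rw [this] at hPtr
        simpa using hPtr
      have hconst : ∀ g : G, ρ g = 1 := by
        intro g
        rw [hρ, hP1, mul_one, hUms]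
      obtain ⟨a, b, hab⟩ := Fintype.exists_pair_of_one_lt_card (α := G) (by omega)
      exact hab (hinj ((hconst a).trans (hconst b).symm))
  have hdC : (d : ℂ) ≠ 0 := by
    simp only [ne_eq, Nat.cast_eq_zero]; omega
  have hd1C : (d : ℂ) - 1 ≠ 0 := by
    intro h
    have : (d : ℂ) = 1 := by linear_combination h
    have : d = 1 := by exact_mod_cast this
    omega
  have hcardC : (Fintype.card G : ℂ) ≠ 0 := by
    simp only [ne_eq, Nat.cast_eq_zero]
    omega
  set c : ℂ := (d : ℂ) / ((Fintype.card G : ℂ) * ((d : ℂ) - 1)) with hc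
  have hc0 : 0 ≤ c := by
    have hr : (0:ℝ) ≤ (d:ℝ) / ((Fintype.card G : ℝ) * ((d:ℝ) - 1)) := by
      apply div_nonneg (by positivity)
      apply mul_nonneg (by positivity)
      have : (2 : ℝ) ≤ d := by exact_mod_cast hd2
      linarith
    have heq : ((((d:ℝ) / ((Fintype.card G : ℝ) * ((d:ℝ) - 1))) : ℝ) : ℂ) = c := by
      rw [hc]; push_cast; ring
    rw [← heq]
    exact Complex.zero_le_real.mpr hr
  -- 1 - P facts
  have h1Ph : (1 - P).IsHermitian := Matrix.isHermitian_one.sub hPh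
  have h1PP : (1 - P) * (1 - P) = 1 - P := by
    rw [sub_mul, one_mul, mul_sub, mul_one, hPP, sub_self, sub_zero]
  have h1Ppsd : (1 - P).PosSemidef := by
    have := Matrix.posSemidef_conjTranspose_mul_self (1 - P)
    rwa [h1Ph.eq, h1PP] at this
  have hP1P : P * (1 - P) = 0 := by
    rw [mul_sub, mul_one, hPP, sub_self]
  have htr1P : (1 - P).trace = (d : ℂ) - 1 := by
    rw [Matrix.trace_sub, Matrix.trace_one, hPtr]
    simp [Fintype.card_fin]
  -- trace of conjugated matrix
  have htrconj : ∀ (g : G) (X : Matrix (Fin d) (Fin d) ℂ),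
      ((U g : Matrix (Fin d) (Fin d) ℂ) * X * star (U g : Matrix (Fin d) (Fin d) ℂ)).trace = X.trace := by
    intro g X
    rw [Matrix.trace_mul_comm, ← mul_assoc, hUsm, one_mul]
  -- product collapse
  have hcollapse : ∀ (g : G) (X Y : Matrix (Fin d) (Fin d) ℂ),
      ((U g : Matrix (Fin d) (Fin d) ℂ) * X * star (U g : Matrix (Fin d) (Fin d) ℂ)) *
        ((U g : Matrix (Fin d) (Fin d) ℂ) * Y * star (U g : Matrix (Fin d) (Fin d) ℂ))
      = (U g : Matrix (Fin d) (Fin d) ℂ) * (X * Y) * star (U g : Matrix (Fin d) (Fin d) ℂ) := by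
    intro g X Y
    have key : ∀ Z : Matrix (Fin d) (Fin d) ℂ,
        star (U g : Matrix (Fin d) (Fin d) ℂ) * ((U g : Matrix (Fin d) (Fin d) ℂ) * Z) = Z := by
      intro Z; rw [← mul_assoc, hUsm, one_mul]
    simp only [mul_assoc, key]
  refine ⟨?_, ?_, ?_⟩
  · -- positivity
    intro g
    rw [hM g]
    apply smul_psd hc0
    have := h1Ppsd.mul_mul_conjTranspose_same (U g : Matrix (Fin d) (Fin d) ℂ)
    rwa [← Matrix.star_eq_conjTranspose] at this
  · -- sums to identity
    have hsum : ∑ g, M g = c • ∑ g, ((U g : Matrix (Fin d) (Fin d) ℂ) * (1 - P) * star (U g : Matrix (Fin d) (Fin d) ℂ)) := by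
      rw [Finset.smul_sum]
      exact Finset.sum_congr rfl fun g _ => hM g
    rw [hsum, key_lemma U hirr hdC, htr1P, smul_smul]
    have : c * ((Fintype.card G : ℂ) * ((d : ℂ) - 1) / d) = 1 := by
      rw [hc]; field_simp
    rw [this, one_smul]
  · intro g
    constructor
    · -- zero trace
      rw [hρ g, hM g, Matrix.mul_smul, hcollapse, hP1P, Matrix.mul_zero, Matrix.zero_mul,
        smul_zero, Matrix.trace_zero]
    · -- sum of traces nonzero
      have hsumρ : ∑ h, ρ h = ((Fintype.card G : ℂ) * 1 / d) • 1 := by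
        rw [← hPtr]
        rw [show (∑ h, ρ h) = ∑ h, ((U h : Matrix (Fin d) (Fin d) ℂ) * P * star (U h : Matrix (Fin d) (Fin d) ℂ)) from Finset.sum_congr rfl fun h _ => hρ h]
        exact key_lemma U hirr hdC P
      have htrMg : (M g).trace = c * ((d : ℂ) - 1) := by
        rw [hM g, Matrix.trace_smul, htrconj, htr1P, smul_eq_mul]
      have : ∑ h, (ρ h * M g).trace = (Fintype.card G : ℂ) * 1 / d * (c * ((d:ℂ) - 1)) := by
        rw [← Matrix.trace_sum, ← Finset.sum_mul, hsumρ, Matrix.smul_mul, one_mul,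
          Matrix.trace_smul, smul_eq_mul, htrMg]
      rw [this]
      rw [hc]
      field_simp
      norm_num
end
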